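/- Fix p > 3 and A ∈ ℝ, and let φ : [0,∞) → ℝ be continuous with |φ(t)| ≤ 1 for all t. Then there exists a radius R₁ > 0 (depending only on p and A) with the following properties. Let X be the set of continuous functions ρ : [R₁,∞) → [−1,1] with lim_{r→∞} ρ(r) = 0, equipped with the metric d(ρ₁,ρ₂) = sup_{r ≥ R₁} |ρ₁(r) − ρ₂(r)|, and for ρ ∈ X define (Lρ)(r) = −∫_r^∞ ∫_s^∞ φ(t)·|ρ(t)+A|^{p−1}(ρ(t)+A)·t^{−(p−1)} dt ds for r ≥ R₁. Then: (i) for every ρ ∈ X the iterated improper integral converges absolutely and Lρ ∈ X; (ii) d(Lρ₁, Lρ₂) ≤ ½·d(ρ₁,ρ₂) for all ρ₁, ρ₂ ∈ X; (iii) L has a unique fixed point in X. -/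

import Mathlib

open MeasureTheory Set Filter

/-- The pure power nonlinearity `F(u) = |u|^{p-1} u`. -/
noncomputable def nlF (p u : ℝ) : ℝ := |u| ^ (p - 1) * u

/-- Membership in the space `X` of continuous functions
`ρ : [R₁,∞) → [-1,1]` with `ρ(r) → 0` as `r → ∞`. -/
def memX (R₁ : ℝ) (ρ : ℝ → ℝ) : Prop :=
  ContinuousOn ρ (Ici R₁) ∧ (∀ r ∈ Ici R₁, ρ r ∈ Icc (-1 : ℝ) 1) ∧
    Tendsto ρ atTop (nhds 0)

/-- The map `(Lρ)(r) = -∫_r^∞ ∫_s^∞ φ(t) F(ρ(t)+A) t^{-(p-1)} dt ds`. -/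
noncomputable def Lmap (p A : ℝ) (φ ρ : ℝ → ℝ) (r : ℝ) : ℝ :=
  -∫ s in Ici r, ∫ t in Ici s, φ t * nlF p (ρ t + A) / t ^ (p - 1)

lemma nlF_cont {p : ℝ} (hp : 1 < p) : Continuous (nlF p) :=
  (continuous_abs.rpow_const fun _ => Or.inr (by linarith)).mul continuous_id

lemma nlF_bound {p B : ℝ} (hp : 1 < p) {u : ℝ} (hu : |u| ≤ B) : |nlF p u| ≤ B ^ p := by
  have hB : 0 ≤ B := (abs_nonneg u).trans hu
  have h1 : |nlF p u| = |u| ^ (p - 1) * |u| := by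
    rw [nlF, abs_mul, abs_of_nonneg (Real.rpow_nonneg (abs_nonneg u) _)]
  rcases eq_or_ne u 0 with h | h
  · simp only [h, nlF, mul_zero, abs_zero]
    exact Real.rpow_nonneg hB p
  · rw [h1, ← Real.rpow_add_one (abs_ne_zero.2 h), show p - 1 + 1 = p by ring]
    exact Real.rpow_le_rpow (abs_nonneg u) hu (by linarith)

lemma nlF_hasDerivAt {p : ℝ} (hp : 1 < p) (u : ℝ) :
    HasDerivAt (nlF p) (p * |u| ^ (p - 1)) u := by
  rcases lt_trichotomy u 0 with hu | hu | hu
  · have h2 : HasDerivAt (fun x : ℝ => (-x) ^ p) (p * (-u) ^ (p - 1) * (-1)) u :=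
      (Real.hasDerivAt_rpow_const (p := p) (Or.inl (by linarith))).comp u (hasDerivAt_neg u)
    have h1 : HasDerivAt (fun x : ℝ => -((-x) ^ p)) (p * (-u) ^ (p - 1)) u := by
      have : HasDerivAt (fun x : ℝ => -((-x) ^ p)) _ u := h2.neg; convert this using 1; ring
    have h3 : nlF p =ᶠ[nhds u] fun x => -((-x) ^ p) := by
      filter_upwards [Iio_mem_nhds hu] with x hx
      have hx' : (0:ℝ) < -x := by simpa using hx
      rw [nlF, abs_of_neg hx]
      rw [show (-x) ^ (p - 1) * x = -((-x) ^ (p-1) * (-x)) by ring,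
        ← Real.rpow_add_one (by positivity : (-x) ≠ 0), show p - 1 + 1 = p by ring]
    have := h1.congr_of_eventuallyEq h3
    simpa [abs_of_neg hu] using this
  · subst hu
    rw [hasDerivAt_iff_tendsto_slope]
    have hc : ContinuousAt (fun x : ℝ => |x| ^ (p - 1)) 0 :=
      (Real.continuousAt_rpow_const _ _ (Or.inr (by linarith))).comp
        continuous_abs.continuousAt
    have h0 : Tendsto (fun x : ℝ => |x| ^ (p - 1)) (nhdsWithin 0 {(0:ℝ)}ᶜ) (nhds 0) := by
      have := (hc.continuousWithinAt (s := {(0:ℝ)}ᶜ)).tendsto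
      simpa [Real.zero_rpow (by linarith : p - 1 ≠ 0)] using this
    have heq : (fun x : ℝ => |x| ^ (p - 1)) =ᶠ[nhdsWithin 0 {(0:ℝ)}ᶜ] slope (nlF p) 0 := by
      filter_upwards [self_mem_nhdsWithin] with x hx
      have hx0 : x ≠ 0 := hx
      rw [slope_def_field]
      simp only [nlF, abs_zero, Real.zero_rpow (by linarith : p - 1 ≠ 0), zero_mul, sub_zero]
      rw [mul_div_assoc, div_self hx0, mul_one]
    have := h0.congr' heq
    simpa [Real.zero_rpow (by linarith : p - 1 ≠ 0)] using this
  · have h1 : HasDerivAt (fun x : ℝ => x ^ p) (p * u ^ (p - 1)) u :=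
      Real.hasDerivAt_rpow_const (Or.inl (by linarith))
    have h3 : nlF p =ᶠ[nhds u] fun x => x ^ p := by
      filter_upwards [Ioi_mem_nhds hu] with x hx
      rw [nlF, abs_of_pos hx, ← Real.rpow_add_one (ne_of_gt hx), show p - 1 + 1 = p by ring]
    have := h1.congr_of_eventuallyEq h3
    simpa [abs_of_pos hu] using this

lemma nlF_lipschitz {p B : ℝ} (hp : 1 < p) {u v : ℝ}
    (hu : |u| ≤ B) (hv : |v| ≤ B) : |nlF p u - nlF p v| ≤ p * B ^ (p - 1) * |u - v| := by
  have key := Convex.norm_image_sub_le_of_norm_hasDerivWithin_le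
    (f := nlF p) (f' := fun x => p * |x| ^ (p - 1)) (s := Icc (-B) B) (C := p * B ^ (p - 1))
    (fun x _ => (nlF_hasDerivAt hp x).hasDerivWithinAt)
    (fun x hx => by
      rw [Real.norm_eq_abs,
        abs_of_nonneg (mul_nonneg (by linarith) (Real.rpow_nonneg (abs_nonneg x) _))]
      have h1 : |x| ≤ B := abs_le.2 ⟨hx.1, hx.2⟩
      have h2 := Real.rpow_le_rpow (abs_nonneg x) h1 (by linarith : (0:ℝ) ≤ p - 1)
      exact mul_le_mul_of_nonneg_left h2 (by linarith))
    (convex_Icc _ _) (abs_le.1 hv) (abs_le.1 hu)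
  simpa [Real.norm_eq_abs] using key
/-- Integrability and bound for a function dominated by `C * t ^ a` on `[c,∞)`. -/
lemma aux_int {c a C : ℝ} (hc : 0 < c) (ha : a < -1) {h : ℝ → ℝ}
    (hm : AEStronglyMeasurable h (volume.restrict (Ici c)))
    (hb : ∀ t ∈ Ici c, |h t| ≤ C * t ^ a) :
    IntegrableOn h (Ici c) ∧
      |∫ t in Ici c, h t| ≤ C * (c ^ (a + 1) / (-(a + 1))) := by
  have hg : IntegrableOn (fun t : ℝ => C * t ^ a) (Ici c) := by
    rw [integrableOn_Ici_iff_integrableOn_Ioi]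
    exact (integrableOn_Ioi_rpow_of_lt ha hc).const_mul C
  have hae : ∀ᵐ t ∂(volume.restrict (Ici c)), ‖h t‖ ≤ C * t ^ a := by
    filter_upwards [ae_restrict_mem measurableSet_Ici] with t ht
    simpa [Real.norm_eq_abs] using hb t ht
  have hint : IntegrableOn h (Ici c) := Integrable.mono' hg hm hae
  refine ⟨hint, ?_⟩
  calc |∫ t in Ici c, h t| ≤ ∫ t in Ici c, C * t ^ a :=
        norm_integral_le_of_norm_le hg hae
    _ = C * ∫ t in Ioi c, t ^ a := by
        rw [integral_Ici_eq_integral_Ioi, integral_const_mul]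
    _ = C * (c ^ (a + 1) / (-(a + 1))) := by
        rw [integral_Ioi_rpow_of_lt ha hc, neg_div, div_neg]

/-- Continuity of `s ↦ ∫_s^∞ h` given integrability on `[c,∞)`. -/
lemma aux_cont {c : ℝ} {h : ℝ → ℝ} (hint : IntegrableOn h (Ici c)) :
    ContinuousOn (fun s => ∫ t in Ici s, h t) (Ici c) := by
  set h' : ℝ → ℝ := (Ici c).indicator h with hh'
  have h'int : Integrable h' := (integrable_indicator_iff measurableSet_Ici).2 hint
  have Pcont : Continuous fun s => ∫ t in c..s, h' t := h'int.continuous_primitive c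
  have key : ∀ s ∈ Ici c,
      (∫ t in Ici c, h' t) - (∫ t in c..s, h' t) = ∫ t in Ici s, h t := by
    intro s hs
    have hdisj : Disjoint (Ico c s) (Ici s) :=
      Set.disjoint_left.2 fun x hx1 hx2 => absurd hx2 (not_le.2 hx1.2)
    have hsplit := setIntegral_union (f := h') (μ := volume) hdisj measurableSet_Ici
        h'int.integrableOn h'int.integrableOn
    rw [Ico_union_Ici_eq_Ici hs] at hsplit
    have hIco : (∫ t in Ico c s, h' t) = ∫ t in c..s, h' t := by
      rw [intervalIntegral.integral_of_le hs, MeasureTheory.integral_Ico_eq_integral_Ioo,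
        MeasureTheory.integral_Ioc_eq_integral_Ioo]
    have hIci : (∫ t in Ici s, h' t) = ∫ t in Ici s, h t :=
      setIntegral_congr_fun measurableSet_Ici fun t ht => indicator_of_mem (hs.trans ht) h
    rw [hsplit, hIco, hIci]; ring
  exact (ContinuousOn.congr (Continuous.continuousOn (by continuity)) fun s hs =>
    (key s hs).symm)

lemma twolevel {p R₁ C : ℝ} (hp : 3 < p) (hR1 : 1 ≤ R₁) {f : ℝ → ℝ}
    (hf : ContinuousOn f (Ici R₁))
    (hb : ∀ t ∈ Ici R₁, |f t| ≤ C * t ^ (-(p - 1))) :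
    (∀ s ∈ Ici R₁, IntegrableOn f (Ici s)) ∧
    (∀ r ∈ Ici R₁, IntegrableOn (fun s => ∫ t in Ici s, f t) (Ici r)) ∧
    (∀ r ∈ Ici R₁, |∫ s in Ici r, ∫ t in Ici s, f t| ≤
        C / ((p - 2) * (p - 3)) * r ^ (-(p - 3))) ∧
    ContinuousOn (fun r => ∫ s in Ici r, ∫ t in Ici s, f t) (Ici R₁) := by
  have stepA : ∀ s ∈ Ici R₁, IntegrableOn f (Ici s) ∧
      |∫ t in Ici s, f t| ≤ C / (p - 2) * s ^ (-(p - 2)) := by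
    intro s hs
    have hs0 : (0:ℝ) < s := lt_of_lt_of_le one_pos (hR1.trans hs)
    have H := aux_int hs0 (by linarith : -(p - 1) < -1)
      ((hf.mono (Ici_subset_Ici.2 hs)).aestronglyMeasurable measurableSet_Ici)
      (fun t ht => hb t ((hs.trans ht : R₁ ≤ t)))
    refine ⟨H.1, ?_⟩
    have h2 := H.2
    rw [show -(p - 1) + 1 = -(p - 2) by ring, neg_neg] at h2
    calc |∫ t in Ici s, f t| ≤ C * (s ^ (-(p - 2)) / (p - 2)) := h2
      _ = C / (p - 2) * s ^ (-(p - 2)) := by ring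
  have hgc : ContinuousOn (fun s => ∫ t in Ici s, f t) (Ici R₁) :=
    aux_cont (stepA R₁ self_mem_Ici).1
  have stepB : ∀ r ∈ Ici R₁, IntegrableOn (fun s => ∫ t in Ici s, f t) (Ici r) ∧
      |∫ s in Ici r, ∫ t in Ici s, f t| ≤ C / (p - 2) / (p - 3) * r ^ (-(p - 3)) := by
    intro r hr
    have hr0 : (0:ℝ) < r := lt_of_lt_of_le one_pos (hR1.trans hr)
    have H := aux_int hr0 (by linarith : -(p - 2) < -1)
      ((hgc.mono (Ici_subset_Ici.2 hr)).aestronglyMeasurable measurableSet_Ici)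
      (fun s hs => (stepA s ((hr.trans hs : R₁ ≤ s))).2)
    refine ⟨H.1, ?_⟩
    have h2 := H.2
    rw [show -(p - 2) + 1 = -(p - 3) by ring, neg_neg] at h2
    calc |∫ s in Ici r, ∫ t in Ici s, f t| ≤ C / (p - 2) * (r ^ (-(p - 3)) / (p - 3)) := h2
      _ = C / (p - 2) / (p - 3) * r ^ (-(p - 3)) := by ring
  refine ⟨fun s hs => (stepA s hs).1, fun r hr => (stepB r hr).1, fun r hr => ?_,
    aux_cont (stepB R₁ self_mem_Ici).1⟩
  rw [← div_div]
  exact (stepB r hr).2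

lemma integrand_cont {p A R₁ : ℝ} (hp : 3 < p) (hR1 : 1 ≤ R₁) {φ ρ : ℝ → ℝ}
    (hφc : ContinuousOn φ (Ici 0)) (hρc : ContinuousOn ρ (Ici R₁)) :
    ContinuousOn (fun t => φ t * nlF p (ρ t + A) / t ^ (p - 1)) (Ici R₁) := by
  have hsub : Ici R₁ ⊆ Ici (0 : ℝ) := Ici_subset_Ici.2 (by linarith)
  have hpos : ∀ t ∈ Ici R₁, (0:ℝ) < t := fun t ht => lt_of_lt_of_le one_pos (hR1.trans ht)
  refine ContinuousOn.div ?_ ?_ fun t ht => ne_of_gt (Real.rpow_pos_of_pos (hpos t ht) _)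
  · exact (hφc.mono hsub).mul
      ((nlF_cont (by linarith)).comp_continuousOn (hρc.add continuousOn_const))
  · exact continuousOn_id.rpow_const fun t ht => Or.inl (ne_of_gt (hpos t ht))

lemma integrand_bound {p A R₁ : ℝ} (hp : 3 < p) (hR1 : 1 ≤ R₁) {φ ρ : ℝ → ℝ}
    (hφb : ∀ t ∈ Ici (0:ℝ), |φ t| ≤ 1) (hρb : ∀ r ∈ Ici R₁, ρ r ∈ Icc (-1:ℝ) 1) :
    ∀ t ∈ Ici R₁, |φ t * nlF p (ρ t + A) / t ^ (p - 1)| ≤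
      (1 + |A|) ^ p * t ^ (-(p - 1)) := by
  intro t ht
  have ht0 : (0:ℝ) < t := lt_of_lt_of_le one_pos (hR1.trans ht)
  have h1 : |ρ t + A| ≤ 1 + |A| :=
    (abs_add_le _ _).trans (add_le_add_left (abs_le.2 ⟨(hρb t ht).1, (hρb t ht).2⟩) _)
  have h2 : |nlF p (ρ t + A)| ≤ (1 + |A|) ^ p := nlF_bound (by linarith) h1
  have hpow : (0:ℝ) < t ^ (p - 1) := Real.rpow_pos_of_pos ht0 _
  rw [abs_div, abs_mul, abs_of_pos hpow, Real.rpow_neg ht0.le, ← div_eq_mul_inv]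
  apply div_le_div_of_nonneg_right ?_ hpow.le
  calc |φ t| * |nlF p (ρ t + A)| ≤ 1 * ((1 + |A|) ^ p) :=
      mul_le_mul (hφb t ht0.le) h2 (abs_nonneg _) zero_le_one
    _ = (1 + |A|) ^ p := one_mul _

lemma integrand_diff_bound {p A R₁ d : ℝ} (hp : 3 < p) (hR1 : 1 ≤ R₁) {φ ρ₁ ρ₂ : ℝ → ℝ}
    (hφb : ∀ t ∈ Ici (0:ℝ), |φ t| ≤ 1)
    (hρ₁b : ∀ r ∈ Ici R₁, ρ₁ r ∈ Icc (-1:ℝ) 1) (hρ₂b : ∀ r ∈ Ici R₁, ρ₂ r ∈ Icc (-1:ℝ) 1)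
    (hd : ∀ t ∈ Ici R₁, |ρ₁ t - ρ₂ t| ≤ d) :
    ∀ t ∈ Ici R₁, |φ t * nlF p (ρ₁ t + A) / t ^ (p - 1) -
        φ t * nlF p (ρ₂ t + A) / t ^ (p - 1)| ≤
      (p * (1 + |A|) ^ (p - 1) * d) * t ^ (-(p - 1)) := by
  intro t ht
  have ht0 : (0:ℝ) < t := lt_of_lt_of_le one_pos (hR1.trans ht)
  have hpow : (0:ℝ) < t ^ (p - 1) := Real.rpow_pos_of_pos ht0 _
  have h1 : |ρ₁ t + A| ≤ 1 + |A| :=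
    (abs_add_le _ _).trans (add_le_add_left (abs_le.2 ⟨(hρ₁b t ht).1, (hρ₁b t ht).2⟩) _)
  have h2 : |ρ₂ t + A| ≤ 1 + |A| :=
    (abs_add_le _ _).trans (add_le_add_left (abs_le.2 ⟨(hρ₂b t ht).1, (hρ₂b t ht).2⟩) _)
  have hl : |nlF p (ρ₁ t + A) - nlF p (ρ₂ t + A)| ≤
      p * (1 + |A|) ^ (p - 1) * |ρ₁ t - ρ₂ t| := by
    have := nlF_lipschitz (by linarith : (1:ℝ) < p) h1 h2
    simpa using this
  have hd' : |ρ₁ t - ρ₂ t| ≤ d := hd t ht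
  have hLip0 : (0:ℝ) ≤ p * (1 + |A|) ^ (p - 1) :=
    mul_nonneg (by linarith) (Real.rpow_nonneg (by positivity) _)
  have heq : φ t * nlF p (ρ₁ t + A) / t ^ (p - 1) - φ t * nlF p (ρ₂ t + A) / t ^ (p - 1)
      = φ t * (nlF p (ρ₁ t + A) - nlF p (ρ₂ t + A)) / t ^ (p - 1) := by ring
  rw [heq, abs_div, abs_mul, abs_of_pos hpow, Real.rpow_neg ht0.le, ← div_eq_mul_inv]
  apply div_le_div_of_nonneg_right ?_ hpow.le
  calc |φ t| * |nlF p (ρ₁ t + A) - nlF p (ρ₂ t + A)|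
      ≤ 1 * (p * (1 + |A|) ^ (p - 1) * |ρ₁ t - ρ₂ t|) :=
        mul_le_mul (hφb t ht0.le) hl (abs_nonneg _) zero_le_one
    _ = p * (1 + |A|) ^ (p - 1) * |ρ₁ t - ρ₂ t| := one_mul _
    _ ≤ p * (1 + |A|) ^ (p - 1) * d := mul_le_mul_of_nonneg_left hd' hLip0

lemma Lmap_congr {p A R₁ : ℝ} {φ ρ₁ ρ₂ : ℝ → ℝ} (h : ∀ t ∈ Ici R₁, ρ₁ t = ρ₂ t) :
    ∀ r ∈ Ici R₁, Lmap p A φ ρ₁ r = Lmap p A φ ρ₂ r := by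
  intro r hr
  unfold Lmap
  congr 1
  refine setIntegral_congr_fun measurableSet_Ici fun s hs => ?_
  refine setIntegral_congr_fun measurableSet_Ici fun t ht => ?_
  rw [h t (mem_Ici.2 (hr.trans (hs.trans ht)))]
/-- for `p > 3` and `A ∈ ℝ` there is a radius `R₁ > 0`
(depending only on `p` and `A`) such that, for every continuous
`φ : [0,∞) → [-1,1]`: (i) for each `ρ ∈ X` the iterated improper integral
defining `Lρ` converges absolutely and `Lρ ∈ X`; (ii) `L` is a
`½`-contraction on `X` in the supremum metric; (iii) `L` has a fixed point
in `X`, unique up to equality on `[R₁,∞)`. -/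
theorem contraction_fixed_point (p A : ℝ) (hp : 3 < p) :
    ∃ R₁ : ℝ, 0 < R₁ ∧
      ∀ φ : ℝ → ℝ, ContinuousOn φ (Ici (0 : ℝ)) →
        (∀ t ∈ Ici (0 : ℝ), |φ t| ≤ 1) →
        -- (i) absolute convergence of the iterated integral, and `Lρ ∈ X`
        ((∀ ρ : ℝ → ℝ, memX R₁ ρ →
            (∀ s ∈ Ici R₁,
              IntegrableOn (fun t => φ t * nlF p (ρ t + A) / t ^ (p - 1))
                (Ici s)) ∧
            (∀ r ∈ Ici R₁,
              IntegrableOn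
                (fun s => ∫ t in Ici s, φ t * nlF p (ρ t + A) / t ^ (p - 1))
                (Ici r)) ∧
            memX R₁ (Lmap p A φ ρ)) ∧
        -- (ii) `d(Lρ₁, Lρ₂) ≤ ½ d(ρ₁, ρ₂)`
        (∀ ρ₁ ρ₂ : ℝ → ℝ, memX R₁ ρ₁ → memX R₁ ρ₂ → ∀ r ∈ Ici R₁,
            |Lmap p A φ ρ₁ r - Lmap p A φ ρ₂ r| ≤
              (1 / 2) * ⨆ r' : Ici R₁, |ρ₁ r' - ρ₂ r'|) ∧
        -- (iii) existence and uniqueness of the fixed point of `L` in `X`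
        (∃ ρ : ℝ → ℝ, memX R₁ ρ ∧ (∀ r ∈ Ici R₁, Lmap p A φ ρ r = ρ r) ∧
            ∀ ρ' : ℝ → ℝ, memX R₁ ρ' → (∀ r ∈ Ici R₁, Lmap p A φ ρ' r = ρ' r) →
              ∀ r ∈ Ici R₁, ρ' r = ρ r)) := by
  have hB0 : (0:ℝ) < 1 + |A| := by positivity
  set M : ℝ := (1 + |A|) ^ p with hMdef
  set Lip : ℝ := p * (1 + |A|) ^ (p - 1) with hLdef
  have hM0 : 0 ≤ M := Real.rpow_nonneg hB0.le _
  have hLip0 : 0 ≤ Lip := mul_nonneg (by linarith) (Real.rpow_nonneg hB0.le _)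
  have hD : 0 < (p - 2) * (p - 3) := by nlinarith
  have hden : 0 < 2 * (M + Lip + 1) := by linarith
  have hev : ∀ᶠ x : ℝ in atTop,
      x ^ (-(p - 3)) < (p - 2) * (p - 3) / (2 * (M + Lip + 1)) :=
    (tendsto_rpow_neg_atTop (by linarith : (0:ℝ) < p - 3)).eventually_lt_const
      (div_pos hD hden)
  obtain ⟨R₁, hRsmall, hR1⟩ := (hev.and (eventually_ge_atTop (1:ℝ))).exists
  have hR10 : (0:ℝ) < R₁ := by linarith
  refine ⟨R₁, hR10, ?_⟩
  intro φ hφc hφb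
  -- the main analytic facts, for any admissible ρ
  have keyProps : ∀ ρ : ℝ → ℝ, ContinuousOn ρ (Ici R₁) →
      (∀ r ∈ Ici R₁, ρ r ∈ Icc (-1:ℝ) 1) →
      (∀ s ∈ Ici R₁,
        IntegrableOn (fun t => φ t * nlF p (ρ t + A) / t ^ (p - 1)) (Ici s)) ∧
      (∀ r ∈ Ici R₁,
        IntegrableOn (fun s => ∫ t in Ici s, φ t * nlF p (ρ t + A) / t ^ (p - 1))
          (Ici r)) ∧
      (∀ r ∈ Ici R₁, |Lmap p A φ ρ r| ≤ M / ((p - 2) * (p - 3)) * r ^ (-(p - 3))) ∧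
      ContinuousOn (Lmap p A φ ρ) (Ici R₁) := by
    intro ρ hρc hρb
    obtain ⟨h1, h2, h3, h4⟩ := twolevel hp hR1 (integrand_cont hp hR1 hφc hρc)
      (integrand_bound hp hR1 hφb hρb)
    refine ⟨h1, h2, fun r hr => ?_, h4.neg⟩
    have := h3 r hr
    simpa [Lmap, abs_neg] using this
  -- the quantitative smallness of the tail coefficient
  have key_small : ∀ C₀ : ℝ, 0 ≤ C₀ → ∀ r ∈ Ici R₁,
      C₀ / ((p - 2) * (p - 3)) * r ^ (-(p - 3)) ≤ C₀ / (2 * (M + Lip + 1)) := by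
    intro C₀ hC₀ r hr
    have hmono : r ^ (-(p - 3)) ≤ R₁ ^ (-(p - 3)) :=
      Real.rpow_le_rpow_of_nonpos hR10 hr (by linarith)
    have h5 : r ^ (-(p - 3)) ≤ (p - 2) * (p - 3) / (2 * (M + Lip + 1)) :=
      hmono.trans hRsmall.le
    calc C₀ / ((p - 2) * (p - 3)) * r ^ (-(p - 3))
        ≤ C₀ / ((p - 2) * (p - 3)) * ((p - 2) * (p - 3) / (2 * (M + Lip + 1))) :=
          mul_le_mul_of_nonneg_left h5 (div_nonneg hC₀ hD.le)
      _ = C₀ / (2 * (M + Lip + 1)) := by rw [div_mul_div_comm, mul_comm C₀, mul_div_mul_left _ _ hD.ne']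
  have hLle1 : ∀ r ∈ Ici R₁, M / ((p - 2) * (p - 3)) * r ^ (-(p - 3)) ≤ 1 := by
    intro r hr
    refine (key_small M hM0 r hr).trans ?_
    rw [div_le_one hden]; linarith
  -- the half-contraction estimate, with an arbitrary uniform bound d
  have core : ∀ ρ₁ ρ₂ : ℝ → ℝ, ContinuousOn ρ₁ (Ici R₁) → ContinuousOn ρ₂ (Ici R₁) →
      (∀ r ∈ Ici R₁, ρ₁ r ∈ Icc (-1:ℝ) 1) → (∀ r ∈ Ici R₁, ρ₂ r ∈ Icc (-1:ℝ) 1) →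
      ∀ d : ℝ, 0 ≤ d → (∀ t ∈ Ici R₁, |ρ₁ t - ρ₂ t| ≤ d) →
      ∀ r ∈ Ici R₁, |Lmap p A φ ρ₁ r - Lmap p A φ ρ₂ r| ≤ (1 / 2) * d := by
    intro ρ₁ ρ₂ hc₁ hc₂ hb₁ hb₂ d hd0 hd r hr
    obtain ⟨h1₁, h2₁, _, _⟩ := keyProps ρ₁ hc₁ hb₁
    obtain ⟨h1₂, h2₂, _, _⟩ := keyProps ρ₂ hc₂ hb₂
    set f₁ : ℝ → ℝ := fun t => φ t * nlF p (ρ₁ t + A) / t ^ (p - 1) with hf₁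
    set f₂ : ℝ → ℝ := fun t => φ t * nlF p (ρ₂ t + A) / t ^ (p - 1) with hf₂
    obtain ⟨_, _, hB3, _⟩ := twolevel hp hR1 (f := fun t => f₁ t - f₂ t)
      ((integrand_cont hp hR1 hφc hc₁).sub (integrand_cont hp hR1 hφc hc₂))
      (integrand_diff_bound hp hR1 hφb hb₁ hb₂ hd)
    have e1 : EqOn (fun s => ∫ t in Ici s, (f₁ t - f₂ t))
        (fun s => (∫ t in Ici s, f₁ t) - ∫ t in Ici s, f₂ t) (Ici r) := by
      intro s hs
      exact integral_sub (h1₁ s (mem_Ici.2 (hr.trans hs))) (h1₂ s (mem_Ici.2 (hr.trans hs)))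
    have e2 : (∫ s in Ici r, ∫ t in Ici s, (f₁ t - f₂ t)) =
        (∫ s in Ici r, ∫ t in Ici s, f₁ t) - ∫ s in Ici r, ∫ t in Ici s, f₂ t := by
      rw [setIntegral_congr_fun measurableSet_Ici e1]
      exact integral_sub (h2₁ r hr) (h2₂ r hr)
    have e3 : Lmap p A φ ρ₁ r - Lmap p A φ ρ₂ r =
        -∫ s in Ici r, ∫ t in Ici s, (f₁ t - f₂ t) := by
      rw [e2]; simp only [Lmap]; ring
    rw [e3, abs_neg]
    refine (hB3 r hr).trans ?_
    refine (key_small (Lip * d) (mul_nonneg hLip0 hd0) r hr).trans ?_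
    rw [div_le_iff₀ hden]
    nlinarith [mul_nonneg hM0 hd0]
  refine ⟨?_, ?_, ?_⟩
  · -- (i)
    rintro ρ ⟨hρc, hρb, -⟩
    obtain ⟨h1, h2, h3, h4⟩ := keyProps ρ hρc hρb
    refine ⟨h1, h2, h4, fun r hr => ?_, ?_⟩
    · exact abs_le.1 ((h3 r hr).trans (hLle1 r hr))
    · have hg : Tendsto (fun r : ℝ => M / ((p - 2) * (p - 3)) * r ^ (-(p - 3)))
          atTop (nhds 0) := by
        have := (tendsto_rpow_neg_atTop (by linarith : (0:ℝ) < p - 3)).const_mul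
          (M / ((p - 2) * (p - 3)))
        simpa using this
      refine squeeze_zero_norm' ?_ hg
      filter_upwards [eventually_ge_atTop R₁] with r hr
      simpa [Real.norm_eq_abs] using h3 r hr
  · -- (ii)
    intro ρ₁ ρ₂ h₁ h₂ r hr
    have hbdd : BddAbove (range fun r' : Ici R₁ => |ρ₁ ↑r' - ρ₂ ↑r'|) := by
      refine ⟨2, ?_⟩
      rintro x ⟨r', rfl⟩
      have b1 := h₁.2.1 ↑r' r'.2
      have b2 := h₂.2.1 ↑r' r'.2
      exact abs_le.2 ⟨by linarith [b1.1, b2.2], by linarith [b1.2, b2.1]⟩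
    haveI : Nonempty (Ici R₁) := ⟨⟨R₁, self_mem_Ici⟩⟩
    have hd : ∀ t ∈ Ici R₁, |ρ₁ t - ρ₂ t| ≤ ⨆ r' : Ici R₁, |ρ₁ ↑r' - ρ₂ ↑r'| :=
      fun t ht => le_ciSup hbdd ⟨t, ht⟩
    have hd0 : 0 ≤ ⨆ r' : Ici R₁, |ρ₁ ↑r' - ρ₂ ↑r'| :=
      (abs_nonneg _).trans (hd R₁ self_mem_Ici)
    exact core ρ₁ ρ₂ h₁.1 h₂.1 h₁.2.1 h₂.2.1 _ hd0 hd r hr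
  · -- (iii)
    haveI inst1 : Nonempty (Ici R₁) := ⟨⟨R₁, self_mem_Ici⟩⟩
    set Ext : (BoundedContinuousFunction ↥(Ici R₁) ℝ) → ℝ → ℝ :=
      fun f r => f ⟨max r R₁, mem_Ici.2 (le_max_right _ _)⟩ with hExt
    have hExtc : ∀ f : BoundedContinuousFunction ↥(Ici R₁) ℝ, Continuous (Ext f) := fun f =>
      f.continuous.comp ((continuous_id.max continuous_const).subtype_mk _)
    have hExt_eq : ∀ (f : BoundedContinuousFunction ↥(Ici R₁) ℝ) (r : ℝ) (hr : r ∈ Ici R₁),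
        Ext f r = f ⟨r, hr⟩ := by
      intro f r hr
      simp only [hExt]
      congr 1
      exact Subtype.ext (max_eq_left hr)
    set Y : Set (BoundedContinuousFunction ↥(Ici R₁) ℝ) :=
      ⋂ x : ↥(Ici R₁), (fun f : BoundedContinuousFunction ↥(Ici R₁) ℝ => f x) ⁻¹' (Icc (-1:ℝ) 1) with hY
    have hYmem : ∀ f : BoundedContinuousFunction ↥(Ici R₁) ℝ, f ∈ Y ↔ ∀ x : ↥(Ici R₁), f x ∈ Icc (-1:ℝ) 1 := by
      intro f; simp [hY, mem_iInter]
    have hYclosed : IsClosed Y :=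
      isClosed_iInter fun x => isClosed_Icc.preimage
        (continuous_eval_const x)
    haveI : CompleteSpace Y := hYclosed.completeSpace_coe
    haveI : Nonempty Y := ⟨⟨0, (hYmem 0).2 fun x => by
      simp only [BoundedContinuousFunction.coe_zero, Pi.zero_apply]
      exact ⟨by norm_num, by norm_num⟩⟩⟩
    have hmk : ∀ g : ℝ → ℝ, ContinuousOn g (Ici R₁) →
        (∀ r ∈ Ici R₁, g r ∈ Icc (-1:ℝ) 1) →
        ∃ f : BoundedContinuousFunction ↥(Ici R₁) ℝ, f ∈ Y ∧ ∀ x : ↥(Ici R₁), f x = g ↑x := by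
      intro g hc hb
      refine ⟨BoundedContinuousFunction.mkOfBound
        ⟨fun x : ↥(Ici R₁) => g ↑x, hc.restrict⟩ 2 ?_, ?_, fun x => rfl⟩
      · intro x y
        have h1 := hb ↑x x.2; have h2 := hb ↑y y.2
        rw [Real.dist_eq]
        show |g ↑x - g ↑y| ≤ 2
        exact abs_le.2 ⟨by linarith [h1.1, h2.2], by linarith [h1.2, h2.1]⟩
      · exact (hYmem _).2 fun x => hb ↑x x.2
    choose mkF mkY mkEval using hmk
    have hExtb : ∀ f : ↥Y, ∀ r ∈ Ici R₁, Ext ↑f r ∈ Icc (-1:ℝ) 1 := by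
      intro f r hr
      rw [hExt_eq ↑f r hr]
      exact (hYmem ↑f).1 f.2 ⟨r, hr⟩
    have hLc : ∀ f : ↥Y, ContinuousOn (Lmap p A φ (Ext ↑f)) (Ici R₁) :=
      fun f => (keyProps _ (hExtc ↑f).continuousOn (hExtb f)).2.2.2
    have hLb : ∀ f : ↥Y, ∀ r ∈ Ici R₁, Lmap p A φ (Ext ↑f) r ∈ Icc (-1:ℝ) 1 :=
      fun f r hr => abs_le.1
        (((keyProps _ (hExtc ↑f).continuousOn (hExtb f)).2.2.1 r hr).trans (hLle1 r hr))
    set T : ↥Y → ↥Y := fun f =>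
      ⟨mkF _ (hLc f) (hLb f), mkY _ (hLc f) (hLb f)⟩ with hT
    have hcontr : ContractingWith (1/2 : NNReal) T := by
      constructor
      · rw [← NNReal.coe_lt_coe]
        norm_num
      · refine LipschitzWith.of_dist_le_mul fun f g => ?_
        rw [Subtype.dist_eq, Subtype.dist_eq]
        have h0 : (0:ℝ) ≤ (1/2 : ℝ) * dist (f : BoundedContinuousFunction ↥(Ici R₁) ℝ) (g : BoundedContinuousFunction ↥(Ici R₁) ℝ) := by
          positivity
        rw [show ((1/2 : NNReal) : ℝ) = (1/2 : ℝ) by norm_num]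
        refine (BoundedContinuousFunction.dist_le h0).2 fun x => ?_
        show dist (mkF _ (hLc f) (hLb f) x) (mkF _ (hLc g) (hLb g) x) ≤ _
        rw [Real.dist_eq, mkEval _ (hLc f) (hLb f) x, mkEval _ (hLc g) (hLb g) x]
        refine core _ _ (hExtc ↑f).continuousOn (hExtc ↑g).continuousOn
          (hExtb f) (hExtb g) (dist (f : BoundedContinuousFunction ↥(Ici R₁) ℝ) g) dist_nonneg ?_ ↑x x.2
        intro t ht
        rw [hExt_eq _ t ht, hExt_eq _ t ht, ← Real.dist_eq]
        exact BoundedContinuousFunction.dist_coe_le_dist _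
    set fstar := ContractingWith.fixedPoint T hcontr with hfstar
    have hfix : T fstar = fstar := hcontr.fixedPoint_isFixedPt
    set ρstar : ℝ → ℝ := Ext ↑fstar with hρstar
    have hfixρ : ∀ r ∈ Ici R₁, Lmap p A φ ρstar r = ρstar r := by
      intro r hr
      calc Lmap p A φ ρstar r = mkF _ (hLc fstar) (hLb fstar) ⟨r, hr⟩ :=
            (mkEval _ (hLc fstar) (hLb fstar) ⟨r, hr⟩).symm
        _ = ((T fstar : ↥Y) : BoundedContinuousFunction ↥(Ici R₁) ℝ) ⟨r, hr⟩ := rfl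
        _ = (fstar : BoundedContinuousFunction ↥(Ici R₁) ℝ) ⟨r, hr⟩ := by rw [hfix]
        _ = ρstar r := (hExt_eq _ r hr).symm
    have hstar_tendsto : Tendsto ρstar atTop (nhds 0) := by
      have hKP := keyProps ρstar (hExtc ↑fstar).continuousOn (hExtb fstar)
      have hg : Tendsto (fun r : ℝ => M / ((p - 2) * (p - 3)) * r ^ (-(p - 3)))
          atTop (nhds 0) := by
        have := (tendsto_rpow_neg_atTop (by linarith : (0:ℝ) < p - 3)).const_mul
          (M / ((p - 2) * (p - 3)))
        simpa using this
      refine squeeze_zero_norm' ?_ hg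
      filter_upwards [eventually_ge_atTop R₁] with r hr
      rw [Real.norm_eq_abs, ← hfixρ r hr]
      exact hKP.2.2.1 r hr
    refine ⟨ρstar, ⟨(hExtc ↑fstar).continuousOn, hExtb fstar, hstar_tendsto⟩,
      hfixρ, ?_⟩
    intro ρ' hmem hfix'
    obtain ⟨hc', hb', -⟩ := hmem
    have hf'Y : mkF ρ' hc' hb' ∈ Y := mkY ρ' hc' hb'
    have hext' : ∀ t ∈ Ici R₁, Ext (mkF ρ' hc' hb') t = ρ' t := by
      intro t ht; rw [hExt_eq _ t ht]; exact mkEval ρ' hc' hb' ⟨t, ht⟩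
    have hTfix : T ⟨mkF ρ' hc' hb', hf'Y⟩ = ⟨mkF ρ' hc' hb', hf'Y⟩ := by
      apply Subtype.ext
      apply BoundedContinuousFunction.ext
      intro x
      calc ((T ⟨mkF ρ' hc' hb', hf'Y⟩ : ↥Y) : BoundedContinuousFunction ↥(Ici R₁) ℝ) x
          = Lmap p A φ (Ext (mkF ρ' hc' hb')) ↑x := mkEval _ _ _ x
        _ = Lmap p A φ ρ' ↑x := Lmap_congr hext' ↑x x.2
        _ = ρ' ↑x := hfix' ↑x x.2
        _ = mkF ρ' hc' hb' x := (mkEval ρ' hc' hb' x).symm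
    have huniq : (⟨mkF ρ' hc' hb', hf'Y⟩ : ↥Y) = fstar :=
      hcontr.fixedPoint_unique hTfix
    intro r hr
    calc ρ' r = mkF ρ' hc' hb' ⟨r, hr⟩ := (mkEval ρ' hc' hb' ⟨r, hr⟩).symm
      _ = (fstar : BoundedContinuousFunction ↥(Ici R₁) ℝ) ⟨r, hr⟩ := by rw [← huniq]
      _ = ρstar r := (hExt_eq _ r hr).symm
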